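/- Let α be a complex number that is integral over ℤ, with α ≠ 0, α ≠ 1 and α ≠ −1, and suppose that every complex root of the minimal polynomial of α over ℚ is real. Let d be the degree of this minimal polynomial and let M be the product over its complex roots z (with multiplicity) of max(1, |z|). Then M² ≥ ((1 + √5)/2)^d. -/

import Mathlib

open Polynomial Real goldenRatio

lemma sqrt5_sq : Real.sqrt 5 ^ 2 = 5 := Real.sq_sqrt (by norm_num)
lemma sqrt5_gt : (2:ℝ) < Real.sqrt 5 := by
  nlinarith [sqrt5_sq, Real.sqrt_nonneg 5]

lemma idw : 1/φ + 1/φ^2 = 1 := by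
  unfold goldenRatio
  have h5 := sqrt5_sq
  have := sqrt5_gt
  field_simp
  nlinarith [h5]

lemma id2 : (1 + Real.sqrt 5) * (1/φ) = 2 := by
  unfold goldenRatio
  have := sqrt5_gt
  field_simp

lemma id3 : 1/φ + (Real.sqrt 5 + 2) * (1/φ^2) = Real.sqrt 5 := by
  unfold goldenRatio
  have h5 := sqrt5_sq
  have := sqrt5_gt
  field_simp
  nlinarith [h5]

lemma key1 (t : ℝ) (ht : 0 < t) :
    φ ^ Real.sqrt 5 * (t ^ 2 - 1) ≤ t ^ (1 + Real.sqrt 5) := by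
  have hg := goldenRatio_pos
  have hamgm := Real.geom_mean_le_arith_mean2_weighted
    (by positivity : (0:ℝ) ≤ 1/φ) (by positivity : (0:ℝ) ≤ 1/φ^2)
    (by positivity : (0:ℝ) ≤ φ * t ^ (1 + Real.sqrt 5))
    (by positivity : (0:ℝ) ≤ φ ^ (Real.sqrt 5 + 2)) idw
  have hL : (φ * t ^ (1 + Real.sqrt 5)) ^ (1/φ) *
      (φ ^ (Real.sqrt 5 + 2)) ^ (1/φ^2) = φ ^ Real.sqrt 5 * t ^ 2 := by
    rw [Real.mul_rpow hg.le (by positivity), ← Real.rpow_mul ht.le,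
      ← Real.rpow_mul hg.le, id2, mul_right_comm, ← Real.rpow_add hg, id3,
      show (2:ℝ) = ((2:ℕ):ℝ) by norm_num, Real.rpow_natCast]
  have hR : 1/φ * (φ * t ^ (1 + Real.sqrt 5)) + 1/φ^2 * φ ^ (Real.sqrt 5 + 2)
      = t ^ (1 + Real.sqrt 5) + φ ^ Real.sqrt 5 := by
    have h1 : 1/φ * (φ * t ^ (1 + Real.sqrt 5)) = t ^ (1 + Real.sqrt 5) := by
      field_simp
    have h2 : (1:ℝ)/φ^2 * φ ^ (Real.sqrt 5 + 2) = φ ^ Real.sqrt 5 := by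
      rw [Real.rpow_add hg, Real.rpow_two]
      field_simp
    rw [h1, h2]
  rw [hL, hR] at hamgm
  nlinarith [hamgm]

lemma pointwise (x : ℝ) (hx : x ≠ 0) (hx1 : x ≠ 1) (hxm1 : x ≠ -1) :
    Real.sqrt 5 * Real.log φ + (Real.sqrt 5 - 1) * Real.log |x| + Real.log |x ^ 2 - 1|
      ≤ 2 * Real.sqrt 5 * Real.log (max 1 |x|) := by
  have hs := sqrt5_gt
  have hg := goldenRatio_pos
  have hg1 := one_lt_goldenRatio
  set s := Real.sqrt 5 with hsdef
  set t := |x| with htdef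
  have ht0 : 0 < t := abs_pos.mpr hx
  have ht1 : t ≠ 1 := by
    intro h
    rcases (abs_eq (by norm_num : (0:ℝ) ≤ 1)).mp h with h' | h' <;> simp_all
  have hx2 : |x ^ 2 - 1| = |t ^ 2 - 1| := by rw [htdef, sq_abs]
  rw [hx2]
  rcases lt_or_gt_of_ne ht1 with hlt | hgt
  · -- t < 1
    have hmax : max 1 t = 1 := max_eq_left hlt.le
    have h1t : (0:ℝ) < 1 - t ^ 2 := by nlinarith
    have habs : |t ^ 2 - 1| = 1 - t ^ 2 := by rw [abs_sub_comm]; exact abs_of_pos h1t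
    have hk := key1 (1/t) (by positivity)
    have hk' : φ ^ s * (1 - t ^ 2) ≤ t ^ 2 * (1/t) ^ (1 + s) := by
      have e : (1/t) ^ 2 - 1 = (1 - t ^ 2) / t ^ 2 := by field_simp
      rw [e] at hk
      calc φ ^ s * (1 - t ^ 2) = t ^ 2 * (φ ^ s * ((1 - t ^ 2) / t ^ 2)) := by
            field_simp
        _ ≤ t ^ 2 * (1/t) ^ (1 + s) := by
            exact mul_le_mul_of_nonneg_left hk (by positivity)
    have hlog := (Real.log_le_log_iff (by positivity) (by positivity)).mpr hk'
    rw [Real.log_mul (by positivity) (by positivity), Real.log_rpow hg,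
      Real.log_mul (by positivity) (by positivity), one_div,
      Real.inv_rpow ht0.le, Real.log_inv, Real.log_rpow ht0, Real.log_pow] at hlog
    rw [hmax, habs, Real.log_one]
    push_cast at hlog
    linarith
  · -- t > 1
    have hmax : max 1 t = t := max_eq_right hgt.le
    have h1t : (0:ℝ) < t ^ 2 - 1 := by nlinarith
    have habs : |t ^ 2 - 1| = t ^ 2 - 1 := abs_of_pos h1t
    have hk := key1 t ht0
    have hlog := (Real.log_le_log_iff (by positivity) (by positivity)).mpr hk
    rw [Real.log_mul (by positivity) (by positivity), Real.log_rpow hg,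
      Real.log_rpow ht0] at hlog
    rw [hmax, habs]
    linarith

lemma one_le_multiset_prod (s : Multiset ℝ) (h : ∀ x ∈ s, 1 ≤ x) : 1 ≤ s.prod := by
  induction s using Multiset.induction with
  | empty => simp
  | cons a t ih =>
    have ha := h a (Multiset.mem_cons_self a t)
    have ht := ih (fun x hx => h x (Multiset.mem_cons_of_mem hx))
    rw [Multiset.prod_cons]
    nlinarith

lemma log_multiset_prod (s : Multiset ℝ) (h : ∀ x ∈ s, 0 < x) :
    Real.log s.prod = (s.map Real.log).sum := by
  induction s using Multiset.induction with
  | empty => simp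
  | cons a t ih =>
    have ha := h a (Multiset.mem_cons_self a t)
    have ht : ∀ x ∈ t, (0:ℝ) < x := fun x hx => h x (Multiset.mem_cons_of_mem hx)
    rw [Multiset.prod_cons, Multiset.map_cons, Multiset.sum_cons,
      Real.log_mul ha.ne' (Multiset.prod_pos ht).ne', ih ht]

theorem stmt_10 (α : ℂ) (hint : IsIntegral ℤ α)
    (h0 : α ≠ 0) (h1 : α ≠ 1) (hm1 : α ≠ -1)
    (hreal : ∀ z ∈ ((minpoly ℚ α).map (algebraMap ℚ ℂ)).roots, z.im = 0) :
    (((((minpoly ℚ α).map (algebraMap ℚ ℂ)).roots).map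
        (fun z => max 1 (‖z‖))).prod) ^ 2 ≥
      ((1 + Real.sqrt 5) / 2) ^ (minpoly ℚ α).natDegree := by
  classical
  have hQ : IsIntegral ℚ α := hint.tower_top (A := ℚ)
  set p := minpoly ℚ α with hp
  have hmonic : p.Monic := minpoly.monic hQ
  have hirr : Irreducible p := minpoly.irreducible hQ
  have hpZ : p = (minpoly ℤ α).map (algebraMap ℤ ℚ) :=
    minpoly.isIntegrallyClosed_eq_field_fractions' ℚ hint
  have hevalZ : ∀ k : ℤ, p.eval (k : ℚ) = (((minpoly ℤ α).eval k : ℤ) : ℚ) := by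
    intro k
    rw [hpZ, show ((k:ℚ)) = algebraMap ℤ ℚ k by simp, Polynomial.eval_map,
      Polynomial.eval₂_at_apply]
    simp
  have hne : ∀ k : ℚ, (algebraMap ℚ ℂ k ≠ α) → p.eval k ≠ 0 := by
    intro k hk hzero
    have hdvd : (X - C k) ∣ p := Polynomial.dvd_iff_isRoot.mpr hzero
    have hpeq : p = X - C k :=
      Polynomial.eq_of_monic_of_associated hmonic (Polynomial.monic_X_sub_C k)
        ((Polynomial.irreducible_X_sub_C k).associated_of_dvd hirr hdvd).symm
    have h0' := minpoly.aeval ℚ α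
    rw [← hp, hpeq] at h0'
    simp only [map_sub, Polynomial.aeval_X, Polynomial.aeval_C, sub_eq_zero] at h0'
    exact hk h0'.symm
  have hkey : ∀ k : ℤ, (algebraMap ℚ ℂ (k:ℚ) ≠ α) → 1 ≤ |p.eval ((k:ℤ) : ℚ)| := by
    intro k hk
    have h := hne (k:ℚ) hk
    rw [hevalZ] at h ⊢
    have hz : (minpoly ℤ α).eval k ≠ 0 := by exact_mod_cast h
    have := Int.one_le_abs hz
    calc (1:ℚ) = ((1:ℤ):ℚ) := by norm_num
      _ ≤ ((|(minpoly ℤ α).eval k| : ℤ) : ℚ) := by exact_mod_cast this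
      _ = |(((minpoly ℤ α).eval k : ℤ) : ℚ)| := by push_cast; ring
  -- complex side
  set P := p.map (algebraMap ℚ ℂ) with hP
  set R := P.roots with hR
  set d := p.natDegree with hd
  have hPmonic : P.Monic := hmonic.map _
  have hsplit : P = (R.map fun z => X - C z).prod :=
    (IsAlgClosed.splits P).eq_prod_roots_of_monic hPmonic
  have hcard : Multiset.card R = d :=
    by rw [hR, ← (IsAlgClosed.splits P).natDegree_eq_card_roots, hP, natDegree_map]
  have hevalabs : ∀ c : ℂ, ‖P.eval c‖
      = (R.map fun z => ‖c - z‖).prod := by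
    intro c
    conv_lhs => rw [hsplit]
    have hnm : ∀ m : Multiset ℂ, ‖m.prod‖ = (m.map (‖·‖)).prod :=
      fun m => map_multiset_prod (normHom (α := ℂ)) m
    rw [Polynomial.eval_multiset_prod, hnm, Multiset.map_map,
      Multiset.map_map]
    simp [Function.comp]
  have hPev : ∀ q : ℚ, ‖P.eval (algebraMap ℚ ℂ q)‖ = ((|p.eval q| : ℚ) : ℝ) := by
    intro q
    rw [hP, Polynomial.eval_map, Polynomial.eval₂_at_apply]
    rw [show (algebraMap ℚ ℂ) (p.eval q) = (((p.eval q : ℚ) : ℝ) : ℂ) by push_cast; rfl]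
    rw [Complex.norm_real, Real.norm_eq_abs]
    push_cast
    rfl
  -- evaluations at 0, 1, -1 have absolute value ≥ 1
  have hk0 : 1 ≤ ‖P.eval 0‖ := by
    have h := hkey 0 (by simpa using h0.symm)
    have he := hPev (0:ℚ)
    rw [map_zero] at he
    rw [he]
    push_cast at h ⊢
    exact_mod_cast h
  have hk1 : 1 ≤ ‖P.eval 1‖ := by
    have h := hkey 1 (by simpa using h1.symm)
    have he := hPev (1:ℚ)
    rw [map_one] at he
    rw [he]
    push_cast at h ⊢
    exact_mod_cast h
  have hkm1 : 1 ≤ ‖P.eval (-1)‖ := by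
    have h := hkey (-1) (by simpa using hm1.symm)
    have he := hPev (-1:ℚ)
    rw [map_neg, map_one] at he
    rw [he]
    push_cast at h ⊢
    exact_mod_cast h
  -- roots avoid 0, 1, -1
  have hroot : ∀ z ∈ R, P.eval z = 0 := fun z hz => Polynomial.isRoot_of_mem_roots hz
  have hz0 : ∀ z ∈ R, z ≠ 0 := by
    intro z hz h
    rw [h] at hz
    have := hroot 0 hz
    rw [this] at hk0
    simp at hk0
    linarith
  have hz1 : ∀ z ∈ R, z ≠ 1 := by
    intro z hz h
    rw [h] at hz
    have := hroot 1 hz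
    rw [this] at hk1
    simp at hk1
    linarith
  have hzm1 : ∀ z ∈ R, z ≠ -1 := by
    intro z hz h
    rw [h] at hz
    have := hroot (-1) hz
    rw [this] at hkm1
    simp at hkm1
    linarith
  -- product identities
  have hprod0 : (R.map fun z => ‖z‖).prod = ‖P.eval 0‖ := by
    rw [hevalabs 0]
    congr 1
    apply Multiset.map_congr rfl
    intro z _
    rw [zero_sub]
    exact (norm_neg z).symm
  have hprodB : (R.map fun z => ‖z^2 - 1‖).prod
      = ‖P.eval 1‖ * ‖P.eval (-1)‖ := by
    rw [hevalabs 1, hevalabs (-1), ← Multiset.prod_map_mul]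
    apply congrArg
    apply Multiset.map_congr rfl
    intro z _
    rw [← norm_mul]
    congr 1
    ring
  -- real-part facts
  have hzre : ∀ z ∈ R, z = ((z.re : ℝ) : ℂ) := by
    intro z hz
    apply Complex.ext
    · simp
    · simp [hreal z hz]
  have habsre : ∀ z ∈ R, ‖z‖ = |z.re| := by
    intro z hz
    conv_lhs => rw [hzre z hz]
    rw [Complex.norm_real, Real.norm_eq_abs]
  have habsre2 : ∀ z ∈ R, ‖z^2 - 1‖ = |z.re^2 - 1| := by
    intro z hz
    conv_lhs => rw [hzre z hz]
    rw [show (((z.re:ℝ):ℂ)^2 - 1) = (((z.re^2 - 1 : ℝ)):ℂ) by push_cast; ring]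
    rw [Complex.norm_real, Real.norm_eq_abs]
  -- pointwise inequality summed over roots
  have hsum := Multiset.sum_map_le_sum_map
    (f := fun z : ℂ => Real.sqrt 5 * Real.log φ +
      ((Real.sqrt 5 - 1) * Real.log (‖z‖) + Real.log (‖z^2 - 1‖)))
    (g := fun z : ℂ => 2 * Real.sqrt 5 * Real.log (max 1 (‖z‖)))
    (s := R) ?_
  swap
  · intro z hz
    have hx0 : z.re ≠ 0 := by
      intro h
      exact hz0 z hz (by rw [hzre z hz, h]; simp)
    have hx1 : z.re ≠ 1 := by
      intro h
      exact hz1 z hz (by rw [hzre z hz, h]; simp)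
    have hxm1 : z.re ≠ -1 := by
      intro h
      exact hzm1 z hz (by rw [hzre z hz, h]; simp)
    have hpt := pointwise z.re hx0 hx1 hxm1
    rw [habsre z hz, habsre2 z hz]
    linarith
  -- decompose left sum
  have hposA : ∀ x ∈ R.map (fun z => ‖z‖), (0:ℝ) < x := by
    intro x hx
    obtain ⟨z, hzR, rfl⟩ := Multiset.mem_map.mp hx
    exact norm_pos_iff.mpr (hz0 z hzR)
  have hposB : ∀ x ∈ R.map (fun z => ‖z^2 - 1‖), (0:ℝ) < x := by
    intro x hx
    obtain ⟨z, hzR, rfl⟩ := Multiset.mem_map.mp hx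
    apply norm_pos_iff.mpr
    intro h
    have h' : (z - 1) * (z + 1) = 0 := by rw [← h]; ring
    rcases mul_eq_zero.mp h' with h'' | h''
    · exact hz1 z hzR (by linear_combination h'')
    · exact hzm1 z hzR (by linear_combination h'')
  have hposM : ∀ x ∈ R.map (fun z => max 1 (‖z‖)), (0:ℝ) < x := by
    intro x hx
    obtain ⟨z, hzR, rfl⟩ := Multiset.mem_map.mp hx
    exact lt_of_lt_of_le one_pos (le_max_left _ _)
  have hlogA : (R.map (fun z => Real.log (‖z‖))).sum
      = Real.log ((R.map fun z => ‖z‖).prod) := by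
    rw [log_multiset_prod _ hposA, Multiset.map_map]
    rfl
  have hlogB : (R.map (fun z => Real.log (‖z^2 - 1‖))).sum
      = Real.log ((R.map fun z => ‖z^2 - 1‖).prod) := by
    rw [log_multiset_prod _ hposB, Multiset.map_map]
    rfl
  have hlogM : (R.map (fun z => Real.log (max 1 (‖z‖)))).sum
      = Real.log ((R.map fun z => max 1 (‖z‖)).prod) := by
    rw [log_multiset_prod _ hposM, Multiset.map_map]
    rfl
  have hL1 : (R.map (fun z : ℂ => Real.sqrt 5 * Real.log φ +
      ((Real.sqrt 5 - 1) * Real.log (‖z‖) + Real.log (‖z^2 - 1‖)))).sum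
      = (d : ℝ) * (Real.sqrt 5 * Real.log φ) +
        ((Real.sqrt 5 - 1) * (R.map (fun z => Real.log (‖z‖))).sum +
         (R.map (fun z => Real.log (‖z^2 - 1‖))).sum) := by
    have e0 : (R.map (fun _ : ℂ => Real.sqrt 5 * Real.log φ)).sum
        = (d : ℝ) * (Real.sqrt 5 * Real.log φ) := by
      rw [Multiset.map_const', Multiset.sum_replicate, hcard, nsmul_eq_mul]
    have eA : (R.map (fun z : ℂ => (Real.sqrt 5 - 1) * Real.log (‖z‖))).sum
        = (Real.sqrt 5 - 1) * (R.map (fun z => Real.log (‖z‖))).sum :=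
      Multiset.sum_map_mul_left
    rw [Multiset.sum_map_add, Multiset.sum_map_add, e0, eA]
  have hR1 : (R.map (fun z : ℂ => 2 * Real.sqrt 5 * Real.log (max 1 (‖z‖)))).sum
      = 2 * Real.sqrt 5 *
        Real.log ((R.map fun z => max 1 (‖z‖)).prod) := by
    have eM : (R.map (fun z : ℂ => 2 * Real.sqrt 5 * Real.log (max 1 (‖z‖)))).sum
        = (2 * Real.sqrt 5) * (R.map (fun z => Real.log (max 1 (‖z‖)))).sum :=
      Multiset.sum_map_mul_left
    rw [eM, hlogM]
  -- assemble
  set M := (R.map fun z => max 1 (‖z‖)).prod with hM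
  have hM1 : (1:ℝ) ≤ M := by
    apply one_le_multiset_prod
    intro x hx
    obtain ⟨z, hzR, rfl⟩ := Multiset.mem_map.mp hx
    exact le_max_left _ _
  have hA1 : (1:ℝ) ≤ (R.map fun z => ‖z‖).prod := by rw [hprod0]; exact hk0
  have hB1 : (1:ℝ) ≤ (R.map fun z => ‖z^2 - 1‖).prod := by
    rw [hprodB]
    nlinarith [hk1, hkm1]
  have hlogA0 : 0 ≤ Real.log ((R.map fun z => ‖z‖).prod) := Real.log_nonneg hA1
  have hlogB0 : 0 ≤ Real.log ((R.map fun z => ‖z^2 - 1‖).prod) :=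
    Real.log_nonneg hB1
  rw [hL1, hR1, hlogA, hlogB] at hsum
  have hs5 : (0:ℝ) < Real.sqrt 5 := by linarith [sqrt5_gt]
  have hgl := goldenRatio_pos
  have hdM : (d:ℝ) * Real.log φ ≤ 2 * Real.log M := by
    have h2 : Real.sqrt 5 * ((d:ℝ) * Real.log φ) ≤ Real.sqrt 5 * (2 * Real.log M) := by
      nlinarith [hsum, hlogA0, hlogB0, sqrt5_gt]
    exact le_of_mul_le_mul_left h2 hs5
  rw [ge_iff_le, show ((1:ℝ) + Real.sqrt 5)/2 = φ from rfl]
  have hlogle : Real.log (φ ^ d) ≤ Real.log (M ^ 2) := by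
    rw [Real.log_pow, Real.log_pow]
    push_cast
    linarith
  exact (Real.log_le_log_iff (by positivity) (by positivity)).mp hlogle
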